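/- There exists an (N, n)-selective family of size O(n log(N/n)): for any N > 2 and n ≤ N there is a family F of subsets of [N] with |F| ≤ c·n·log(N/n) (for an absolute constant c) such that for every nonempty Z ⊆ [N] with |Z| ≤ n, some F ∈ F satisfies |Z ∩ F| = 1. -/

import Mathlib

open Finset

lemma count_exact_one {α : Type*} [Fintype α] [DecidableEq α] (t : ℕ) [NeZero t] (Z : Finset α) :
    (Finset.univ.filter fun f : α → Fin t => (Z.filter fun a => f a = 0).card = 1).card
      = Z.card * (t-1)^(Z.card-1) * t^(Fintype.card α - Z.card) := by
  classical
  set S : α → α → Finset (Fin t) := fun z a => if a = z then {0} else if a ∈ Z then {0}ᶜ else univ with hS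
  have hmem : ∀ z ∈ Z, ∀ f : α → Fin t, f ∈ Fintype.piFinset (S z) ↔
      (f z = 0 ∧ ∀ a ∈ Z, a ≠ z → f a ≠ 0) := by
    intro z hz f
    rw [Fintype.mem_piFinset]
    constructor
    · intro h
      refine ⟨by have := h z; simpa [hS] using this, fun a ha hne => ?_⟩
      have := h a
      simp only [hS, if_neg hne, if_pos ha, Finset.mem_compl, Finset.mem_singleton] at this
      exact this
    · intro ⟨h0, hne⟩ a
      by_cases haz : a = z
      · subst haz; simp [hS, h0]
      · by_cases haZ : a ∈ Z
        · simp [hS, haz, haZ, hne a haZ haz]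
        · simp [hS, haz, haZ]
  have hfilter : (Finset.univ.filter fun f : α → Fin t => (Z.filter fun a => f a = 0).card = 1)
      = Z.biUnion (fun z => Fintype.piFinset (S z)) := by
    ext f
    simp only [mem_filter, mem_univ, true_and, mem_biUnion]
    constructor
    · intro h
      obtain ⟨z, hzeq⟩ := Finset.card_eq_one.mp h
      have hz : z ∈ Z ∧ f z = 0 := by
        have : z ∈ Z.filter fun a => f a = 0 := hzeq ▸ mem_singleton_self z
        simpa using this
      refine ⟨z, hz.1, (hmem z hz.1 f).mpr ⟨hz.2, fun a ha hne hfa => hne ?_⟩⟩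
      have : a ∈ Z.filter fun a => f a = 0 := mem_filter.mpr ⟨ha, hfa⟩
      rw [hzeq] at this; exact mem_singleton.mp this
    · intro ⟨z, hz, hf⟩
      obtain ⟨h0, hne⟩ := (hmem z hz f).mp hf
      rw [Finset.card_eq_one]
      refine ⟨z, ?_⟩
      ext a
      simp only [mem_filter, mem_singleton]
      constructor
      · intro ⟨ha, hfa⟩
        by_contra hne'
        exact hne a ha hne' hfa
      · intro h; subst h; exact ⟨hz, h0⟩
  rw [hfilter, Finset.card_biUnion]
  · have hcard : ∀ z ∈ Z, (Fintype.piFinset (S z)).card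
        = (t-1)^(Z.card-1) * t^(Fintype.card α - Z.card) := by
      intro z hz
      rw [Fintype.card_piFinset, ← Finset.prod_mul_prod_compl Z]
      have h1 : ∏ a ∈ Z, (S z a).card = (t-1)^(Z.card-1) := by
        rw [Finset.prod_eq_mul_prod_sdiff_singleton_of_mem hz]
        have hz1 : (S z z).card = 1 := by simp [hS]
        have hc : ∀ a ∈ Z \ {z}, (S z a).card = t - 1 := by
          intro a ha
          obtain ⟨haZ, haz⟩ := Finset.mem_sdiff.mp ha
          rw [Finset.mem_singleton] at haz
          simp only [hS, if_neg haz, if_pos haZ]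
          rw [Finset.card_compl, Finset.card_singleton, Fintype.card_fin]
        rw [hz1, one_mul, Finset.prod_congr rfl hc, Finset.prod_const,
            Finset.card_sdiff_of_subset (by simpa using hz), Finset.card_singleton]
      have h2 : ∏ a ∈ Zᶜ, (S z a).card = t^(Fintype.card α - Z.card) := by
        have hc : ∀ a ∈ Zᶜ, (S z a).card = t := by
          intro a ha
          rw [Finset.mem_compl] at ha
          have haz : a ≠ z := fun h => ha (h ▸ hz)
          simp only [hS, if_neg haz, if_neg ha]
          simp
        rw [Finset.prod_congr rfl hc, Finset.prod_const, Finset.card_compl]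
      rw [h1, h2]
    rw [Finset.sum_congr rfl hcard, Finset.sum_const, smul_eq_mul, mul_assoc]
  · intro z hz z' hz' hne
    rw [Function.onFun, Finset.disjoint_left]
    intro f hf hf'
    obtain ⟨h0, _⟩ := (hmem z hz f).mp hf
    obtain ⟨_, hne'⟩ := (hmem z' hz' f).mp hf'
    exact hne' z hz hne h0
open Finset

lemma exp_two_le : Real.exp 2 ≤ 8 := by
  have h := Real.exp_one_lt_d9
  calc Real.exp 2 = Real.exp 1 * Real.exp 1 := by rw [← Real.exp_add]; norm_num
    _ ≤ 2.7182818286 * 2.7182818286 := by nlinarith [Real.exp_pos 1]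
    _ ≤ 8 := by norm_num

lemma exp_neg_two_ge : Real.exp (-2) ≥ 1/8 := by
  rw [ge_iff_le, Real.exp_neg, one_div]
  gcongr
  exact exp_two_le

lemma one_sub_ge_exp {x : ℝ} (h0 : 0 ≤ x) (h1 : x ≤ 1/2) : Real.exp (-(2*x)) ≤ 1 - x := by
  have he : 1 + 2*x ≤ Real.exp (2*x) := by linarith [Real.add_one_le_exp (2*x)]
  have hprod : Real.exp (-(2*x)) * Real.exp (2*x) = 1 := by
    rw [← Real.exp_add]; simp
  have hE : 0 < Real.exp (-(2*x)) := Real.exp_pos _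
  nlinarith [hE.le, mul_le_mul_of_nonneg_left he hE.le]

lemma scale_lemma {N : ℕ} (t m : ℕ) (ht : 2 ≤ t) (Zs : Finset (Finset (Fin N)))
    (hsize : ∀ Z ∈ Zs, t ≤ 2 * Z.card ∧ Z.card < t)
    (hm : (Zs.card : ℝ) * Real.exp (-(m:ℝ)/16) < 1) :
    ∃ G : Finset (Finset (Fin N)), G.card ≤ m ∧
      ∀ Z ∈ Zs, ∃ F ∈ G, (Z ∩ F).card = 1 := by
  classical
  haveI : NeZero t := ⟨by omega⟩
  set Bad : Finset (Fin N) → Finset (Fin N → Fin t) :=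
    fun Z => Finset.univ.filter fun f => ¬ ((Z.filter fun a => f a = 0).card = 1) with hBad
  clear_value Bad
  have hbadcard : ∀ Z ∈ Zs, ((Bad Z).card : ℝ) ≤ (15/16) * (t:ℝ)^N := by
    intro Z hZ
    obtain ⟨h2k, hkt⟩ := hsize Z hZ
    set k := Z.card with hk
    clear_value k
    have hk1 : 1 ≤ k := by omega
    have hkN : k ≤ N := by
      rw [hk]; simpa using Finset.card_le_card (Finset.subset_univ Z)
    have hgood := count_exact_one t Z
    simp only [Fintype.card_fin, ← hk] at hgood
    have hsplit : (Bad Z).card + k * (t-1)^(k-1) * t^(N-k) = t^N := by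
      simp only [hBad]
      rw [← hgood]
      rw [Finset.filter_not, Finset.card_sdiff_of_subset (Finset.filter_subset _ _)]
      have htot : (Finset.univ : Finset (Fin N → Fin t)).card = t^N := by
        simp [Fintype.card_fin]
      rw [Nat.sub_add_cancel (Finset.card_le_card (Finset.filter_subset _ _)), htot]
    clear hgood
    have htR : (2:ℝ) ≤ t := by exact_mod_cast ht
    have htpos : (0:ℝ) < t := by linarith
    have hkR : 2 * (k:ℝ) ≥ t := by exact_mod_cast h2k
    -- (t-1)^(k-1) ≥ t^(k-1)/8
    have h8 : (t:ℝ)^(k-1) / 8 ≤ ((t:ℝ)-1)^(k-1) := by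
      have hx : (0:ℝ) ≤ 1/(t:ℝ) := by positivity
      have hx2 : 1/(t:ℝ) ≤ 1/2 := by
        rw [div_le_div_iff₀ htpos (by norm_num)]; linarith
      have hfrac : Real.exp (-(2*(1/(t:ℝ)))) ≤ 1 - 1/(t:ℝ) := one_sub_ge_exp hx hx2
      have e1 : ((t:ℝ)-1)^(k-1) = (t:ℝ)^(k-1) * (1 - 1/(t:ℝ))^(k-1) := by
        rw [← mul_pow]; congr 1; field_simp
      have e2 : Real.exp (-(2*(1/(t:ℝ))))^(k-1) ≤ (1 - 1/(t:ℝ))^(k-1) :=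
        pow_le_pow_left₀ (Real.exp_pos _).le hfrac _
      have e3 : Real.exp (-(2*(1/(t:ℝ))))^(k-1) = Real.exp ((k-1:ℕ) * (-(2*(1/(t:ℝ))))) := by
        rw [← Real.exp_nat_mul]
      have e4 : Real.exp (-2) ≤ Real.exp ((k-1:ℕ) * (-(2*(1/(t:ℝ))))) := by
        apply Real.exp_le_exp.mpr
        have hkt' : ((k-1:ℕ):ℝ) ≤ (t:ℝ) := by
          have : k - 1 ≤ t := by omega
          exact_mod_cast this
        have : ((k-1:ℕ):ℝ) * (2*(1/(t:ℝ))) ≤ 2 := by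
          rw [mul_comm]
          calc 2*(1/(t:ℝ)) * ((k-1:ℕ):ℝ) ≤ 2*(1/(t:ℝ)) * (t:ℝ) := by
                apply mul_le_mul_of_nonneg_left hkt'; positivity
            _ = 2 := by field_simp
        nlinarith
      have e5 : (1:ℝ)/8 ≤ (1 - 1/(t:ℝ))^(k-1) := by
        calc (1:ℝ)/8 ≤ Real.exp (-2) := exp_neg_two_ge
          _ ≤ Real.exp ((k-1:ℕ) * (-(2*(1/(t:ℝ))))) := e4
          _ = Real.exp (-(2*(1/(t:ℝ))))^(k-1) := e3.symm
          _ ≤ _ := e2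
      rw [e1]
      have hA : (0:ℝ) ≤ (t:ℝ)^(k-1) := by positivity
      nlinarith
    have hgoodge : ((t:ℝ)^N) / 16 ≤ ((k * (t-1)^(k-1) * t^(N-k) : ℕ) : ℝ) := by
      have hsub : ((t - 1 : ℕ) : ℝ) = (t : ℝ) - 1 := by
        have h1 : 0 < t := by omega
        exact Nat.cast_pred h1
      push_cast [hsub]
      have hN' : (t:ℝ)^N = (t:ℝ) * (t:ℝ)^(k-1) * (t:ℝ)^(N-k) := by
        have : N = 1 + (k-1) + (N-k) := by omega
        conv_lhs => rw [this]
        rw [pow_add, pow_add, pow_one]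
      rw [hN']
      have hB : (0:ℝ) ≤ (t:ℝ)^(N-k) := by positivity
      have hA : (0:ℝ) ≤ (t:ℝ)^(k-1) := by positivity
      calc (t:ℝ) * (t:ℝ)^(k-1) * (t:ℝ)^(N-k) / 16
          ≤ (2*(k:ℝ)) * (t:ℝ)^(k-1) * (t:ℝ)^(N-k) / 16 := by gcongr
        _ = (k:ℝ) * ((t:ℝ)^(k-1)/8) * (t:ℝ)^(N-k) := by ring
        _ ≤ (k:ℝ) * ((t:ℝ)-1)^(k-1) * (t:ℝ)^(N-k) := by
            gcongr
    have hcast : ((Bad Z).card : ℝ) + ((k * (t-1)^(k-1) * t^(N-k) : ℕ) : ℝ) = (t:ℝ)^N := by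
      exact_mod_cast congrArg (Nat.cast : ℕ → ℝ) hsplit
    linarith
  -- tuple space
  set BadT : Finset (Fin N) → Finset (Fin m → (Fin N → Fin t)) :=
    fun Z => Fintype.piFinset (fun _ : Fin m => Bad Z) with hBadT
  have hBadTcard : ∀ Z ∈ Zs, ((BadT Z).card : ℝ) ≤ Real.exp (-(m:ℝ)/16) * ((t:ℝ)^N)^m := by
    intro Z hZ
    simp only [hBadT, Fintype.card_piFinset, Finset.prod_const, Finset.card_univ, Fintype.card_fin]
    push_cast
    calc ((Bad Z).card : ℝ)^m ≤ ((15/16) * (t:ℝ)^N)^m := by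
          apply pow_le_pow_left₀ (by positivity) (hbadcard Z hZ)
      _ = (15/16:ℝ)^m * ((t:ℝ)^N)^m := by rw [mul_pow]
      _ ≤ Real.exp (-(m:ℝ)/16) * ((t:ℝ)^N)^m := by
          have h1 : (15/16:ℝ) ≤ Real.exp (-(1/16)) := by
            have := Real.add_one_le_exp (-(1/16):ℝ); linarith
          have h2 : (15/16:ℝ)^m ≤ Real.exp (-(1/16))^m :=
            pow_le_pow_left₀ (by norm_num) h1 _
          have h3 : Real.exp (-(1/16):ℝ)^m = Real.exp (-(m:ℝ)/16) := by
            rw [← Real.exp_nat_mul]; ring_nf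
          rw [← h3]
          apply mul_le_mul_of_nonneg_right h2 (by positivity)
  set U : Finset (Fin m → (Fin N → Fin t)) := Zs.biUnion BadT with hU
  have hUcard : (U.card : ℝ) < ((t:ℝ)^N)^m := by
    calc (U.card : ℝ) ≤ ∑ Z ∈ Zs, ((BadT Z).card : ℝ) := by
          exact_mod_cast Finset.card_biUnion_le
      _ ≤ ∑ Z ∈ Zs, Real.exp (-(m:ℝ)/16) * ((t:ℝ)^N)^m :=
          Finset.sum_le_sum hBadTcard
      _ = (Zs.card : ℝ) * Real.exp (-(m:ℝ)/16) * ((t:ℝ)^N)^m := by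
          rw [Finset.sum_const, nsmul_eq_mul]; ring
      _ < 1 * ((t:ℝ)^N)^m := by
          apply mul_lt_mul_of_pos_right hm (by positivity)
      _ = ((t:ℝ)^N)^m := one_mul _
  have hex : ∃ ω : Fin m → (Fin N → Fin t), ω ∉ U := by
    have htot : (Fintype.card (Fin m → (Fin N → Fin t)) : ℝ) = ((t:ℝ)^N)^m := by
      rw [Fintype.card_fun, Fintype.card_fun]
      push_cast [Fintype.card_fin]
      rfl
    have hlt : U.card < Fintype.card (Fin m → (Fin N → Fin t)) := by
      have := hUcard
      rw [← htot] at this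
      exact_mod_cast this
    have : (Uᶜ).Nonempty := by
      rw [← Finset.card_pos, Finset.card_compl]
      omega
    obtain ⟨ω, hω⟩ := this
    exact ⟨ω, Finset.mem_compl.mp hω⟩
  obtain ⟨ω, hω⟩ := hex
  refine ⟨Finset.univ.image (fun i : Fin m => Finset.univ.filter fun a => ω i a = 0), ?_, ?_⟩
  · calc _ ≤ (Finset.univ : Finset (Fin m)).card := Finset.card_image_le
      _ = m := by simp
  · intro Z hZ
    have hnot : ω ∉ BadT Z := fun h => hω (Finset.mem_biUnion.mpr ⟨Z, hZ, h⟩)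
    simp only [hBadT, Fintype.mem_piFinset] at hnot
    push_neg at hnot
    obtain ⟨i, hi⟩ := hnot
    simp only [hBad] at hi
    simp only [Finset.mem_filter, Finset.mem_univ, true_and, not_not] at hi
    refine ⟨_, Finset.mem_image_of_mem _ (Finset.mem_univ i), ?_⟩
    have : Z ∩ (Finset.univ.filter fun a => ω i a = 0) = Z.filter fun a => ω i a = 0 := by
      ext a; simp [Finset.mem_inter, Finset.mem_filter]
    rw [this]
    exact hi
open Finset

lemma sum_two_pow_lt (J : ℕ) : ∑ j ∈ Finset.range J, 2^j < 2^J := by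
  induction J with
  | zero => simp
  | succ J ih => rw [Finset.sum_range_succ, pow_succ]; omega

lemma sumJ (J : ℕ) : ∑ j ∈ Finset.range (J+1), (J+1-j) * 2^j ≤ 2^(J+2) := by
  induction J with
  | zero => simp
  | succ J ih =>
    rw [Finset.sum_range_succ]
    have hc : ∀ j ∈ Finset.range (J+1), (J+2-j) * 2^j = (J+1-j)*2^j + 2^j := by
      intro j hj
      rw [Finset.mem_range] at hj
      have : J+2-j = (J+1-j) + 1 := by omega
      rw [this, add_mul, one_mul]
    rw [Finset.sum_congr rfl hc, Finset.sum_add_distrib]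
    have h2 := sum_two_pow_lt (J+1)
    have he : J+2-(J+1) = 1 := by omega
    rw [he, one_mul]
    have : (2:ℕ)^(J+1+2) = 2^(J+2) + 2^(J+1) + 2^(J+1) := by ring
    omega

lemma binom_sum_le (N K : ℕ) (hK1 : 1 ≤ K) (hKN : K ≤ N) :
    (∑ k ∈ Finset.range (K+1), (N.choose k : ℝ)) ≤ Real.exp (K * (1 + Real.log ((N:ℝ) / K))) := by
  have hN0 : 0 < N := by omega
  have hNR : (0:ℝ) < N := by exact_mod_cast hN0
  have hKR : (0:ℝ) < K := by exact_mod_cast hK1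
  set x : ℝ := (K:ℝ) / N with hx
  have hx0 : 0 < x := by positivity
  have hx1 : x ≤ 1 := by
    rw [hx, div_le_one hNR]; exact_mod_cast hKN
  have h1 : (∑ k ∈ Finset.range (K+1), (N.choose k : ℝ)) * x^K
      ≤ ∑ k ∈ Finset.range (K+1), (N.choose k : ℝ) * x^k := by
    rw [Finset.sum_mul]
    apply Finset.sum_le_sum
    intro k hk
    rw [Finset.mem_range] at hk
    have : x^K ≤ x^k := pow_le_pow_of_le_one hx0.le hx1 (by omega)
    have hc : (0:ℝ) ≤ N.choose k := by positivity
    exact mul_le_mul_of_nonneg_left this hc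
  have h2 : (∑ k ∈ Finset.range (K+1), (N.choose k : ℝ) * x^k)
      ≤ ∑ k ∈ Finset.range (N+1), (N.choose k : ℝ) * x^k := by
    apply Finset.sum_le_sum_of_subset_of_nonneg
    · exact Finset.range_subset_range.mpr (by omega)
    · intro k _ _; positivity
  have h3 : (∑ k ∈ Finset.range (N+1), (N.choose k : ℝ) * x^k) = (1+x)^N := by
    rw [show (1:ℝ)+x = x+1 from add_comm 1 x, add_pow]
    apply Finset.sum_congr rfl
    intro k _
    simp [mul_comm]
  have h4 : (1+x)^N ≤ Real.exp K := by
    calc (1+x)^N ≤ (Real.exp x)^N := by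
          apply pow_le_pow_left₀ (by linarith) (by linarith [Real.add_one_le_exp x])
      _ = Real.exp (N * x) := by rw [← Real.exp_nat_mul]
      _ = Real.exp K := by
          congr 1
          rw [hx]; field_simp
  have hxK : (0:ℝ) < x^K := by positivity
  have hS : (∑ k ∈ Finset.range (K+1), (N.choose k : ℝ)) ≤ Real.exp K / x^K := by
    rw [le_div_iff₀ hxK]
    calc _ ≤ _ := h1
      _ ≤ _ := h2
      _ = _ := h3
      _ ≤ _ := h4
  calc _ ≤ Real.exp K / x^K := hS
    _ = Real.exp K * ((N:ℝ)/K)^K := by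
        rw [div_eq_mul_inv, ← inv_pow]
        congr 2
        rw [hx]
        field_simp
    _ = Real.exp K * Real.exp (K * Real.log ((N:ℝ)/K)) := by
        congr 1
        rw [← Real.exp_log (show (0:ℝ) < (N:ℝ)/K by positivity), ← Real.exp_nat_mul]
        congr 1
        rw [Real.log_exp]
    _ = Real.exp (K * (1 + Real.log ((N:ℝ)/K))) := by
        rw [← Real.exp_add]
        congr 1
        ring

theorem selective_family_exists :
    ∃ c : ℝ, 0 < c ∧ ∀ N n : ℕ, 2 < N → 0 < n → n ≤ N →
      ∃ F : Finset (Finset (Fin N)),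
        ((F.card : ℝ) ≤ c * n * Real.log (2 * (N : ℝ) / n)) ∧
        ∀ Z : Finset (Fin N), Z.Nonempty → Z.card ≤ n →
          ∃ Fi ∈ F, (Z ∩ Fi).card = 1 := by
  classical
  refine ⟨1024, by norm_num, ?_⟩
  intro N n hN2 hn0 hnN
  set J := Nat.log 2 n with hJdef
  have hJ1 : 2^J ≤ n := Nat.pow_log_le_self 2 (by omega)
  have hJ2 : n < 2^(J+1) := Nat.lt_pow_succ_log_self (by norm_num) n
  set K : ℕ → ℕ := fun j => min (2^(j+1) - 1) n with hKdef
  set R : ℕ → ℝ := fun j => (K j : ℝ) * (1 + Real.log ((N:ℝ) / (K j))) with hRdef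
  set m : ℕ → ℕ := fun j => ⌈(16:ℝ) * R j⌉₊ + 17 with hmdef
  set Zs : ℕ → Finset (Finset (Fin N)) := fun j =>
    Finset.univ.filter (fun Z => 2^j ≤ Z.card ∧ Z.card ≤ K j) with hZsdef
  have hpow2 : ∀ j : ℕ, 2 ≤ 2^(j+1) := by
    intro j
    calc 2 = 2^1 := rfl
      _ ≤ 2^(j+1) := Nat.pow_le_pow_right (by norm_num) (by omega)
  have hK1 : ∀ j, 1 ≤ K j := by
    intro j
    apply le_min
    · have := hpow2 j; omega
    · omega
  have hKN : ∀ j, K j ≤ N := fun j => le_trans (min_le_right _ _) hnN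
  have hK2 : ∀ j, K j ≤ 2^(j+1) := fun j => le_trans (min_le_left _ _) (Nat.sub_le _ _)
  have hRnn : ∀ j, 0 ≤ R j := by
    intro j
    apply mul_nonneg (by positivity)
    have h1 : (1:ℝ) ≤ (N:ℝ) / (K j) := by
      rw [le_div_iff₀ (by exact_mod_cast hK1 j)]
      simpa using (by exact_mod_cast hKN j : ((K j : ℝ)) ≤ (N:ℝ))
    linarith [Real.log_nonneg h1]
  have hG : ∀ j, ∃ G : Finset (Finset (Fin N)), G.card ≤ m j ∧
      ∀ Z ∈ Zs j, ∃ F ∈ G, (Z ∩ F).card = 1 := by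
    intro j
    apply scale_lemma (2^(j+1)) (m j) (hpow2 j)
    · intro Z hZ
      simp only [hZsdef, Finset.mem_filter] at hZ
      obtain ⟨-, h1, h2⟩ := hZ
      constructor
      · calc 2^(j+1) = 2 * 2^j := by ring
          _ ≤ 2 * Z.card := by omega
      · have := min_le_left (2^(j+1) - 1) n
        have := hpow2 j
        simp only [hKdef] at h2
        omega
    · have hsub : Zs j ⊆ (Finset.range (K j + 1)).biUnion
          (fun k => Finset.powersetCard k Finset.univ) := by
        intro Z hZ
        simp only [hZsdef, Finset.mem_filter] at hZ
        exact Finset.mem_biUnion.mpr ⟨Z.card, Finset.mem_range.mpr (by omega),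
          Finset.mem_powersetCard_univ.mpr rfl⟩
      have hcard1 : (Zs j).card ≤ ∑ k ∈ Finset.range (K j + 1), N.choose k := by
        calc (Zs j).card ≤ _ := Finset.card_le_card hsub
          _ ≤ ∑ k ∈ Finset.range (K j + 1), (Finset.powersetCard k (Finset.univ : Finset (Fin N))).card :=
              Finset.card_biUnion_le
          _ = ∑ k ∈ Finset.range (K j + 1), N.choose k := by
              apply Finset.sum_congr rfl
              intro k _
              rw [Finset.card_powersetCard, Finset.card_univ, Fintype.card_fin]
      have hcardR : ((Zs j).card : ℝ) ≤ Real.exp (R j) := by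
        calc ((Zs j).card : ℝ) ≤ ((∑ k ∈ Finset.range (K j + 1), N.choose k : ℕ) : ℝ) := by
              exact_mod_cast hcard1
          _ = ∑ k ∈ Finset.range (K j + 1), (N.choose k : ℝ) := by push_cast; rfl
          _ ≤ Real.exp ((K j) * (1 + Real.log ((N:ℝ) / (K j)))) :=
              binom_sum_le N (K j) (hK1 j) (hKN j)
          _ = Real.exp (R j) := rfl
      have hmR : 16 * R j < (m j : ℝ) := by
        have h1 : (16:ℝ) * R j ≤ (⌈(16:ℝ) * R j⌉₊ : ℝ) := Nat.le_ceil _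
        have h2 : (m j : ℝ) = (⌈(16:ℝ) * R j⌉₊ : ℝ) + 17 := by
          simp only [hmdef]; push_cast; ring
        linarith
      calc ((Zs j).card : ℝ) * Real.exp (-(m j : ℝ)/16)
          ≤ Real.exp (R j) * Real.exp (-(m j : ℝ)/16) := by
            apply mul_le_mul_of_nonneg_right hcardR (Real.exp_pos _).le
        _ = Real.exp (R j - (m j : ℝ)/16) := by rw [← Real.exp_add]; ring_nf
        _ < 1 := by
            rw [← Real.exp_zero]
            apply Real.exp_lt_exp.mpr
            linarith
  choose G hGc hGsel using hG
  refine ⟨(Finset.range (J+1)).biUnion G, ?_, ?_⟩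
  · -- cardinality bound
    set L := Real.log (2 * (N:ℝ) / n) with hL
    have hnR : (0:ℝ) < n := by exact_mod_cast hn0
    have hNR : (0:ℝ) < N := by positivity
    have hl2 : (0:ℝ) < Real.log 2 := Real.log_pos (by norm_num)
    have hl2' : Real.log 2 < 1 := by
      have := Real.log_two_lt_d9; linarith
    have hLge : Real.log 2 ≤ L := by
      rw [hL]
      apply Real.log_le_log (by norm_num)
      rw [le_div_iff₀ hnR]
      have : (n:ℝ) ≤ N := by exact_mod_cast hnN
      linarith
    have hLhalf : (1:ℝ)/2 < L := by
      have := Real.log_two_gt_d9; linarith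
    have hRj : ∀ j ∈ Finset.range (J+1), R j
        ≤ ((2^(j+1) : ℕ):ℝ) * (1 + L + ((J+1-j : ℕ):ℝ) * Real.log 2) := by
      intro j hj
      rw [Finset.mem_range] at hj
      have hjJ : j ≤ J := by omega
      have h2jK : 2^j ≤ K j := by
        apply le_min
        · have ha : (2:ℕ)^(j+1) = 2 * 2^j := by ring
          have h0 : 1 ≤ (2:ℕ)^j := Nat.one_le_two_pow
          omega
        · calc (2:ℕ)^j ≤ 2^J := Nat.pow_le_pow_right (by norm_num) hjJ
            _ ≤ n := hJ1
      have hKpos : (0:ℝ) < (K j : ℝ) := by exact_mod_cast hK1 j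
      have h2jpos : (0:ℝ) < ((2^j : ℕ):ℝ) := by positivity
      have hlogKj : Real.log ((N:ℝ)/(K j)) ≤ Real.log ((N:ℝ)/((2^j : ℕ):ℝ)) := by
        apply Real.log_le_log (by positivity)
        apply div_le_div_of_nonneg_left hNR.le h2jpos
        exact_mod_cast h2jK
      have hcastJ : ((J+1-j : ℕ):ℝ) = (J:ℝ) + 1 - j := by
        have hle : j ≤ J+1 := by omega
        push_cast [Nat.cast_sub hle]
        ring
      have hlogn : Real.log (n:ℝ) ≤ ((J:ℝ)+1) * Real.log 2 := by
        calc Real.log (n:ℝ) ≤ Real.log (((2^(J+1) : ℕ)):ℝ) := by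
              apply Real.log_le_log hnR
              exact_mod_cast hJ2.le
          _ = ((J:ℝ)+1) * Real.log 2 := by
              push_cast
              rw [Real.log_pow]
              push_cast; ring
      have hlog2j : Real.log (((2^j : ℕ)):ℝ) = (j:ℝ) * Real.log 2 := by
        push_cast
        rw [Real.log_pow]
      have hlogbound : Real.log ((N:ℝ)/((2^j : ℕ):ℝ)) ≤ L + ((J+1-j : ℕ):ℝ) * Real.log 2 := by
        rw [Real.log_div (by positivity) (by positivity), hcastJ, hL,
            Real.log_div (by positivity) (by positivity),
            Real.log_mul (by norm_num) (by positivity), hlog2j]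
        nlinarith [hlogn, hl2]
      calc R j = (K j : ℝ) * (1 + Real.log ((N:ℝ) / (K j))) := rfl
        _ ≤ (K j : ℝ) * (1 + L + ((J+1-j : ℕ):ℝ) * Real.log 2) := by
            apply mul_le_mul_of_nonneg_left _ hKpos.le
            have := le_trans hlogKj hlogbound
            linarith
        _ ≤ ((2^(j+1) : ℕ):ℝ) * (1 + L + ((J+1-j : ℕ):ℝ) * Real.log 2) := by
            apply mul_le_mul_of_nonneg_right
            · exact_mod_cast hK2 j
            · have : (0:ℝ) ≤ ((J+1-j : ℕ):ℝ) := by positivity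
              nlinarith [hLge, hl2]
    have hmj : ∀ j ∈ Finset.range (J+1), (m j : ℝ)
        ≤ 32*(1+L)*((2^j : ℕ):ℝ) + 32*Real.log 2*(((J+1-j)*2^j : ℕ):ℝ) + 18 := by
      intro j hj
      have h1 : (m j : ℝ) ≤ 16 * R j + 18 := by
        have hceil : (⌈(16:ℝ) * R j⌉₊ : ℝ) ≤ 16 * R j + 1 :=
          (Nat.ceil_lt_add_one (by linarith [hRnn j])).le
        have h2 : (m j : ℝ) = (⌈(16:ℝ) * R j⌉₊ : ℝ) + 17 := by
          simp only [hmdef]; push_cast; ring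
        linarith
      have h3 := hRj j hj
      calc (m j : ℝ) ≤ 16 * R j + 18 := h1
        _ ≤ 16 * (((2^(j+1) : ℕ):ℝ) * (1 + L + ((J+1-j : ℕ):ℝ) * Real.log 2)) + 18 := by
            linarith
        _ = 32*(1+L)*((2^j : ℕ):ℝ) + 32*Real.log 2*(((J+1-j)*2^j : ℕ):ℝ) + 18 := by
            push_cast [pow_succ]
            ring
    have hsum1 : ((∑ j ∈ Finset.range (J+1), 2^j : ℕ) : ℝ) ≤ 2*(n:ℝ) := by
      have h := (sum_two_pow_lt (J+1)).le
      have h2 : (2:ℕ)^(J+1) = 2 * 2^J := by ring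
      have : (∑ j ∈ Finset.range (J+1), 2^j : ℕ) ≤ 2 * n := by omega
      exact_mod_cast this
    have hsum2 : ((∑ j ∈ Finset.range (J+1), (J+1-j)*2^j : ℕ) : ℝ) ≤ 4*(n:ℝ) := by
      have h := sumJ J
      have h2 : (2:ℕ)^(J+2) = 4 * 2^J := by ring
      have : (∑ j ∈ Finset.range (J+1), (J+1-j)*2^j : ℕ) ≤ 4 * n := by omega
      exact_mod_cast this
    have hJn : ((J:ℝ)+1) ≤ (n:ℝ) := by
      have := Nat.lt_two_pow_self (n := J)
      have : J + 1 ≤ n := by omega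
      exact_mod_cast this
    have hcard : (((Finset.range (J+1)).biUnion G).card : ℝ)
        ≤ ∑ j ∈ Finset.range (J+1), (m j : ℝ) := by
      calc (((Finset.range (J+1)).biUnion G).card : ℝ)
          ≤ ((∑ j ∈ Finset.range (J+1), (G j).card : ℕ) : ℝ) := by
            exact_mod_cast Finset.card_biUnion_le
        _ ≤ ∑ j ∈ Finset.range (J+1), (m j : ℝ) := by
            push_cast
            exact Finset.sum_le_sum (fun j _ => by exact_mod_cast hGc j)
    calc (((Finset.range (J+1)).biUnion G).card : ℝ)
        ≤ ∑ j ∈ Finset.range (J+1), (m j : ℝ) := hcard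
      _ ≤ ∑ j ∈ Finset.range (J+1),
            (32*(1+L)*((2^j : ℕ):ℝ) + 32*Real.log 2*(((J+1-j)*2^j : ℕ):ℝ) + 18) :=
          Finset.sum_le_sum hmj
      _ = 32*(1+L)*((∑ j ∈ Finset.range (J+1), 2^j : ℕ) : ℝ)
          + 32*Real.log 2*((∑ j ∈ Finset.range (J+1), (J+1-j)*2^j : ℕ) : ℝ)
          + 18*((J:ℝ)+1) := by
          rw [Finset.sum_add_distrib, Finset.sum_add_distrib, ← Finset.mul_sum, ← Finset.mul_sum,
              Finset.sum_const, Finset.card_range]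
          push_cast
          ring
      _ ≤ 32*(1+L)*(2*(n:ℝ)) + 32*Real.log 2*(4*(n:ℝ)) + 18*(n:ℝ) := by
          have hLpos : (0:ℝ) < L := by linarith
          gcongr <;> nlinarith
      _ ≤ 1024 * (n:ℝ) * L := by nlinarith
  · -- coverage
    intro Z hZne hZcard
    have hk1 : 1 ≤ Z.card := Finset.Nonempty.card_pos hZne
    set j := Nat.log 2 Z.card with hjdef
    have hjJ : j ≤ J := Nat.log_mono_right hZcard
    have h2j : 2^j ≤ Z.card := Nat.pow_log_le_self 2 (by omega)
    have hk2 : Z.card < 2^(j+1) := Nat.lt_pow_succ_log_self (by norm_num) _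
    have hZmem : Z ∈ Zs j := by
      simp only [hZsdef, Finset.mem_filter]
      refine ⟨Finset.mem_univ Z, h2j, ?_⟩
      apply le_min <;> omega
    obtain ⟨F, hF, hFZ⟩ := hGsel j Z hZmem
    exact ⟨F, Finset.mem_biUnion.mpr ⟨j, Finset.mem_range.mpr (by omega), hF⟩, hFZ⟩
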